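/- Let 𝔡 be a finite-dimensional real vector space, let X₁, …, X_d ∈ 𝔡 span 𝔡 over ℝ, let λ₁, …, λ_d ∈ ℝ, and let Δ := { μ ∈ 𝔡* : ⟨μ, X_j⟩ ≥ λ_j for j = 1, …, d }. Let π : ℝᵈ → 𝔡 be the surjective linear map sending the j-th standard basis vector e_j to X_j, and let Z := { z ∈ ℂᵈ : Σ_{j=1}^d (|z_j|² + λ_j) Y_j = 0 for every Y = (Y₁, …, Y_d) ∈ ker π }. Define J : ℂᵈ → ℝᵈ by J(z) := (|z_1|² + λ_1, …, |z_d|² + λ_d). Then J(Z) = { (⟨μ, X_1⟩, …, ⟨μ, X_d⟩) : μ ∈ Δ }; in particular, for every z ∈ Z there is a unique μ ∈ Δ with |z_j|² + λ_j = ⟨μ, X_j⟩ for all j, and every μ ∈ Δ arises in this way. (This is the key step of the extended Delzant construction: the image of the induced moment mapping on the reduced space Z/N is exactly the polytope Δ.) -/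

import Mathlib

/-- The key step of the extended Delzant construction: for the zero level set `Z` of
the moment map of `N = ker (Tᵈ → D)`, the image `J(Z)` of the translated moment map
`J(z) = (|z₁|² + λ₁, …, |z_d|² + λ_d)` is exactly the set of tuples
`(⟨μ, X₁⟩, …, ⟨μ, X_d⟩)` with `μ` in the polytope `Δ`; in particular every `z ∈ Z`
determines a unique `μ ∈ Δ`, and every `μ ∈ Δ` arises this way. -/
theorem delzant_moment_image
    {𝔡 : Type*} [AddCommGroup 𝔡] [Module ℝ 𝔡] [FiniteDimensional ℝ 𝔡]
    {d : ℕ} (X : Fin d → 𝔡) (hspan : Submodule.span ℝ (Set.range X) = ⊤)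
    (lam : Fin d → ℝ)
    (Δ : Set (Module.Dual ℝ 𝔡)) (hΔ : Δ = {μ | ∀ j, lam j ≤ μ (X j)})
    (proj : (Fin d → ℝ) →ₗ[ℝ] 𝔡) (hproj : ∀ j, proj (Pi.single j 1) = X j)
    (Z : Set (Fin d → ℂ))
    (hZ : Z = {z | ∀ Y ∈ LinearMap.ker proj,
      ∑ j, (‖z j‖ ^ 2 + lam j) * Y j = 0})
    (J : (Fin d → ℂ) → (Fin d → ℝ))
    (hJ : ∀ z j, J z j = ‖z j‖ ^ 2 + lam j) :
    J '' Z = (fun μ : Module.Dual ℝ 𝔡 => fun j => μ (X j)) '' Δ ∧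
    (∀ z ∈ Z, ∃! μ : Module.Dual ℝ 𝔡, μ ∈ Δ ∧
      ∀ j, ‖z j‖ ^ 2 + lam j = μ (X j)) ∧
    (∀ μ ∈ Δ, ∃ z ∈ Z, ∀ j, ‖z j‖ ^ 2 + lam j = μ (X j)) := by
  subst hΔ hZ
  -- proj Y = ∑ j, Y j • X j
  have hps : ∀ Y : Fin d → ℝ, proj Y = ∑ j, Y j • X j := by
    intro Y
    conv_lhs => rw [← Finset.univ_sum_single Y]
    rw [map_sum]
    refine Finset.sum_congr rfl fun j _ => ?_
    have h1 : Pi.single j (Y j) = Y j • (Pi.single j (1 : ℝ) : Fin d → ℝ) := by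
      funext i
      by_cases hi : i = j <;> simp [Pi.single_apply, hi]
    rw [h1, map_smul, hproj]
  -- surjectivity of proj
  have hsurj : LinearMap.range proj = ⊤ := by
    rw [← top_le_iff, ← hspan, Submodule.span_le]
    rintro x ⟨j, rfl⟩
    exact ⟨Pi.single j 1, hproj j⟩
  -- uniqueness
  have huniq : ∀ μ₁ μ₂ : Module.Dual ℝ 𝔡, (∀ j, μ₁ (X j) = μ₂ (X j)) → μ₁ = μ₂ := by
    intro μ₁ μ₂ h
    apply LinearMap.ext_on hspan
    rintro x ⟨j, rfl⟩
    exact h j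
  -- existence of μ for z in Z
  have key : ∀ z ∈ {z : Fin d → ℂ | ∀ Y ∈ LinearMap.ker proj,
      ∑ j, (‖z j‖ ^ 2 + lam j) * Y j = 0},
      ∃ μ : Module.Dual ℝ 𝔡, (∀ j, lam j ≤ μ (X j)) ∧
        ∀ j, ‖z j‖ ^ 2 + lam j = μ (X j) := by
    intro z hz
    set v : Fin d → ℝ := fun j => ‖z j‖ ^ 2 + lam j with hv
    set f : (Fin d → ℝ) →ₗ[ℝ] ℝ := ∑ j, v j • LinearMap.proj j with hf
    have hfapp : ∀ Y, f Y = ∑ j, v j * Y j := by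
      intro Y
      simp [hf, LinearMap.sum_apply, LinearMap.smul_apply]
    obtain ⟨g, hg⟩ := proj.exists_rightInverse_of_surjective hsurj
    have hgapp : ∀ x, proj (g x) = x := fun x => by
      simpa using LinearMap.congr_fun hg x
    refine ⟨f.comp g, ?_, ?_⟩
    all_goals
      have hμX : ∀ j, (f.comp g) (X j) = v j := by
        intro j
        have hker : g (X j) - Pi.single j 1 ∈ LinearMap.ker proj := by
          rw [LinearMap.mem_ker, map_sub, hgapp, hproj, sub_self]
        have h0 : f (g (X j) - Pi.single j 1) = 0 := by
          rw [hfapp]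
          exact hz _ hker
        have h2 : f (g (X j)) = f (Pi.single j 1) := by
          have := h0
          rw [map_sub, sub_eq_zero] at this
          exact this
        have h3 : f (Pi.single j 1) = v j := by
          rw [hfapp]
          simp [Pi.single_apply]
        simp only [LinearMap.comp_apply]
        rw [h2, h3]
    · intro j
      rw [hμX j]
      have : (0:ℝ) ≤ ‖z j‖ ^ 2 := by positivity
      simp only [hv]; linarith
    · intro j
      rw [hμX j]
  -- reverse existence
  have rev : ∀ μ : Module.Dual ℝ 𝔡, (∀ j, lam j ≤ μ (X j)) →
      ∃ z ∈ {z : Fin d → ℂ | ∀ Y ∈ LinearMap.ker proj,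
        ∑ j, (‖z j‖ ^ 2 + lam j) * Y j = 0},
      ∀ j, ‖z j‖ ^ 2 + lam j = μ (X j) := by
    intro μ hμ
    set z : Fin d → ℂ := fun j => ((Real.sqrt (μ (X j) - lam j) : ℝ) : ℂ) with hzdef
    have hval : ∀ j, ‖z j‖ ^ 2 + lam j = μ (X j) := by
      intro j
      have h1 : ‖z j‖ = Real.sqrt (μ (X j) - lam j) := by
        rw [hzdef]
        simp [abs_of_nonneg (Real.sqrt_nonneg _)]
      rw [h1, Real.sq_sqrt (by linarith [hμ j])]
      ring
    refine ⟨z, ?_, hval⟩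
    intro Y hY
    calc ∑ j, (‖z j‖ ^ 2 + lam j) * Y j
        = ∑ j, μ (X j) * Y j := by
          refine Finset.sum_congr rfl fun j _ => ?_
          rw [hval j]
      _ = μ (∑ j, Y j • X j) := by
          rw [map_sum]
          refine Finset.sum_congr rfl fun j _ => ?_
          rw [map_smul, smul_eq_mul, mul_comm]
      _ = μ (proj Y) := by rw [hps Y]
      _ = 0 := by rw [LinearMap.mem_ker.mp hY, map_zero]
  refine ⟨?_, ?_, ?_⟩
  · ext w
    constructor
    · rintro ⟨z, hz, rfl⟩
      obtain ⟨μ, hμ, heq⟩ := key z hz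
      exact ⟨μ, hμ, by funext j; rw [hJ z j, heq j]⟩
    · rintro ⟨μ, hμ, rfl⟩
      obtain ⟨z, hz, heq⟩ := rev μ hμ
      exact ⟨z, hz, by funext j; rw [hJ z j, heq j]⟩
  · intro z hz
    obtain ⟨μ, hμ, heq⟩ := key z hz
    refine ⟨μ, ⟨hμ, heq⟩, ?_⟩
    rintro μ' ⟨hμ', heq'⟩
    exact huniq μ' μ fun j => by rw [← heq' j, heq j]
  · intro μ hμ
    exact rev μ hμ
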